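/- Let E be a Euclidean space, let p : ι → E be a family of points, let T be a nonempty finite subset of ι such that dist(p i, p j) ≤ Λ for all i, j ∈ T, and let S be a nonempty subset of T. Then dist(centroid of p over S, centroid of p over T) ≤ ((|T| − 1)/|T|) · Λ. In particular, if |T| ≤ n + 1 then this distance is at most (n/(n+1)) · Λ. -/

import Mathlib

/-- The centroid in a vector space as a scaled sum. -/
lemma centroid_eq_smul_sum' {E : Type*} [NormedAddCommGroup E] [InnerProductSpace ℝ E]
    {ι : Type*} (p : ι → E) (S : Finset ι) (hS : S.Nonempty) :
    S.centroid ℝ p = (S.card : ℝ)⁻¹ • ∑ i ∈ S, p i := by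
  rw [Finset.centroid_def,
    S.affineCombination_eq_linear_combination p _ (S.sum_centroidWeights_eq_one_of_nonempty ℝ hS)]
  simp [Finset.centroidWeights_apply, Finset.smul_sum]

/-- If all pairwise distances among the points `p i`, `i ∈ T`, are at most `Λ`,
then for any nonempty `S ⊆ T` the distance between the centroids of `p` over `S`
and over `T` is at most `((|T| - 1)/|T|) * Λ`; in particular it is at most
`(n/(n+1)) * Λ` whenever `|T| ≤ n + 1`. -/
theorem dist_centroid_subset_le
    {E : Type*} [NormedAddCommGroup E] [InnerProductSpace ℝ E] {ι : Type*}
    (p : ι → E) (T : Finset ι) (hT : T.Nonempty) (Λ : ℝ)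
    (hΛ : ∀ i ∈ T, ∀ j ∈ T, dist (p i) (p j) ≤ Λ)
    (S : Finset ι) (hS : S.Nonempty) (hST : S ⊆ T) :
    dist (S.centroid ℝ p) (T.centroid ℝ p) ≤ ((T.card : ℝ) - 1) / (T.card : ℝ) * Λ ∧
    ∀ n : ℕ, T.card ≤ n + 1 →
      dist (S.centroid ℝ p) (T.centroid ℝ p) ≤ (n : ℝ) / ((n : ℝ) + 1) * Λ := by
  classical
  obtain ⟨i₀, hi₀⟩ := hT
  have hΛ0 : 0 ≤ Λ := le_trans dist_nonneg (hΛ i₀ hi₀ i₀ hi₀)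
  have hScard : (0 : ℝ) < S.card := by exact_mod_cast Finset.card_pos.mpr hS
  have hTcard : (0 : ℝ) < T.card := by exact_mod_cast Finset.card_pos.mpr ⟨i₀, hi₀⟩
  set cS := S.centroid ℝ p with hcS
  set cT := T.centroid ℝ p with hcT
  -- distance from cS to any p j, j ∈ T, is at most Λ
  have hdist : ∀ j ∈ T, ‖cS - p j‖ ≤ Λ := by
    intro j hj
    have h1 : cS - p j = (S.card : ℝ)⁻¹ • ∑ i ∈ S, (p i - p j) := by
      rw [hcS, centroid_eq_smul_sum' p S hS, Finset.sum_sub_distrib, smul_sub,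
        Finset.sum_const, ← Nat.cast_smul_eq_nsmul ℝ, smul_smul,
        inv_mul_cancel₀ (ne_of_gt hScard), one_smul]
    rw [h1, norm_smul]
    have h2 : ‖∑ i ∈ S, (p i - p j)‖ ≤ (S.card : ℝ) * Λ := by
      calc ‖∑ i ∈ S, (p i - p j)‖ ≤ ∑ i ∈ S, ‖p i - p j‖ := norm_sum_le _ _
        _ ≤ ∑ _i ∈ S, Λ := Finset.sum_le_sum fun i hi => by
            rw [← dist_eq_norm]; exact hΛ i (hST hi) j hj
        _ = (S.card : ℝ) * Λ := by rw [Finset.sum_const, nsmul_eq_mul]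
    rw [norm_inv, Real.norm_natCast]
    calc (S.card : ℝ)⁻¹ * ‖∑ i ∈ S, (p i - p j)‖
        ≤ (S.card : ℝ)⁻¹ * ((S.card : ℝ) * Λ) := by
          exact mul_le_mul_of_nonneg_left h2 (inv_nonneg.2 hScard.le)
      _ = Λ := by field_simp
  -- key identity
  have hkey : cS - cT = (T.card : ℝ)⁻¹ • ∑ j ∈ T \ S, (cS - p j) := by
    have hTsum : ∑ j ∈ T, (cS - p j) = ∑ j ∈ T \ S, (cS - p j) := by
      rw [← Finset.sum_sdiff hST]
      have hSsum : ∑ j ∈ S, (cS - p j) = 0 := by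
        rw [Finset.sum_sub_distrib, Finset.sum_const, hcS, centroid_eq_smul_sum' p S hS,
          ← Nat.cast_smul_eq_nsmul ℝ, smul_smul, mul_inv_cancel₀ (ne_of_gt hScard), one_smul, sub_self]
      rw [hSsum, add_zero]
    rw [← hTsum, hcT, centroid_eq_smul_sum' p T ⟨i₀, hi₀⟩, Finset.sum_sub_distrib, smul_sub,
      Finset.sum_const, ← Nat.cast_smul_eq_nsmul ℝ, smul_smul,
      inv_mul_cancel₀ (ne_of_gt hTcard), one_smul]
  have hmain : dist cS cT ≤ ((T.card : ℝ) - 1) / (T.card : ℝ) * Λ := by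
    rw [dist_eq_norm, hkey, norm_smul, norm_inv, Real.norm_natCast]
    have hcard : ((T \ S).card : ℝ) ≤ (T.card : ℝ) - 1 := by
      have h1 : (T \ S).card = T.card - S.card := Finset.card_sdiff_of_subset hST
      have h2 : 1 ≤ S.card := Finset.card_pos.mpr hS
      have h3 : S.card ≤ T.card := Finset.card_le_card hST
      have : (T \ S).card ≤ T.card - 1 := by omega
      have h4 : 1 ≤ T.card := le_trans h2 h3
      calc ((T \ S).card : ℝ) ≤ ((T.card - 1 : ℕ) : ℝ) := by exact_mod_cast this
        _ = (T.card : ℝ) - 1 := by push_cast [h4]; ring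
    have hnorm : ‖∑ j ∈ T \ S, (cS - p j)‖ ≤ ((T.card : ℝ) - 1) * Λ := by
      calc ‖∑ j ∈ T \ S, (cS - p j)‖ ≤ ∑ j ∈ T \ S, ‖cS - p j‖ := norm_sum_le _ _
        _ ≤ ∑ _j ∈ T \ S, Λ := Finset.sum_le_sum fun j hj =>
            hdist j (Finset.mem_sdiff.1 hj).1
        _ = ((T \ S).card : ℝ) * Λ := by rw [Finset.sum_const, nsmul_eq_mul]
        _ ≤ ((T.card : ℝ) - 1) * Λ := mul_le_mul_of_nonneg_right hcard hΛ0
    calc (T.card : ℝ)⁻¹ * ‖∑ j ∈ T \ S, (cS - p j)‖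
        ≤ (T.card : ℝ)⁻¹ * (((T.card : ℝ) - 1) * Λ) :=
          mul_le_mul_of_nonneg_left hnorm (inv_nonneg.2 hTcard.le)
      _ = ((T.card : ℝ) - 1) / (T.card : ℝ) * Λ := by field_simp
  refine ⟨hmain, fun n hn => le_trans hmain ?_⟩
  apply mul_le_mul_of_nonneg_right _ hΛ0
  rw [div_le_div_iff₀ hTcard (by positivity)]
  have hn' : (T.card : ℝ) ≤ (n : ℝ) + 1 := by exact_mod_cast hn
  nlinarith
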